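/- Let p > 0, let c ∈ (0,1), and let (k_n) be a sequence of integers with 1 ≤ k_n ≤ n and k_n/n → c as n → ∞. Then there exist a constant C and an integer N such that for all n ≥ N, |Σ_{j=0}^{n-k_n-1} ((n−k_n−j)/(n+1−k_n))·(1 − p/n − 1/n²)^j − (n/p)·(1 − (1 − e^{−p·(1−k_n/n)})/(p·(1−k_n/n)))| ≤ C. -/

import Mathlib

open Filter

lemma sum_aux12 (q : ℝ) (hq : q ≠ 1) (m : ℕ) :
    ∑ j ∈ Finset.range m, ((m : ℝ) - j) * q ^ j
      = ((m : ℝ) - (m + 1) * q + q ^ (m + 1)) / (1 - q) ^ 2 := by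
  induction m with
  | zero => simp
  | succ m ih =>
    have hgeom : ∑ j ∈ Finset.range (m+1), q ^ j = (q ^ (m+1) - 1)/(q - 1) :=
      geom_sum_eq hq (m+1)
    have h1 : ∑ j ∈ Finset.range (m+1), (((m:ℕ)+1 : ℝ) - j) * q ^ j
        = (∑ j ∈ Finset.range (m+1), ((m : ℝ) - j) * q ^ j)
          + ∑ j ∈ Finset.range (m+1), q ^ j := by
      rw [← Finset.sum_add_distrib]
      exact Finset.sum_congr rfl fun j _ => by push_cast; ring
    have h2 : ∑ j ∈ Finset.range (m+1), ((m : ℝ) - j) * q ^ j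
        = ∑ j ∈ Finset.range m, ((m : ℝ) - j) * q ^ j := by
      rw [Finset.sum_range_succ]; simp
    have hq1 : q - 1 ≠ 0 := sub_ne_zero.mpr hq
    have hq1' : (1 : ℝ) - q ≠ 0 := sub_ne_zero.mpr (Ne.symm hq)
    push_cast
    rw [h1, h2, ih, hgeom]
    field_simp
    ring

lemma exp_lip12 {s t : ℝ} (hts : t ≤ s) (hs : s ≤ 0) :
    Real.exp s - Real.exp t ≤ s - t := by
  have h1 : 1 + (t - s) ≤ Real.exp (t - s) := by
    have := Real.add_one_le_exp (t - s); linarith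
  have h2 : Real.exp t = Real.exp s * Real.exp (t - s) := by
    rw [← Real.exp_add]; ring_nf
  have h3 : Real.exp s ≤ 1 := Real.exp_le_one_iff.mpr hs
  nlinarith [Real.exp_pos s]

lemma alg_S12 (M n p Q : ℝ) (hn : n ≠ 0) (hM : M + 1 ≠ 0) (hpn : p * n + 1 ≠ 0) :
    (M - (M + 1) * (1 - (p * n + 1) / n ^ 2) + Q) / ((M + 1) * ((p * n + 1) / n ^ 2) ^ 2)
      = n ^ 2 / (p * n + 1) - n ^ 4 * (1 - Q) / ((M + 1) * (p * n + 1) ^ 2) := by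
  field_simp
  ring

lemma alg_T12 (M n p R : ℝ) (hn : n ≠ 0) (hM : M ≠ 0) (hp : p ≠ 0) :
    (n / p) * (1 - (1 - R) / (p * (M / n)))
      = n / p - n ^ 2 * (1 - R) / (p ^ 2 * M) := by
  field_simp

set_option maxHeartbeats 2000000 in
theorem stmt_12 (p : ℝ) (hp : 0 < p) (c : ℝ) (hc0 : 0 < c) (hc1 : c < 1)
    (k : ℕ → ℕ) (hk : ∀ n : ℕ, 1 ≤ n → 1 ≤ k n ∧ k n ≤ n)
    (hlim : Tendsto (fun n : ℕ => (k n : ℝ) / n) atTop (nhds c)) :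
    ∃ C : ℝ, ∃ N : ℕ, ∀ n : ℕ, N ≤ n →
      |(∑ j ∈ Finset.range (n - k n),
            (((n : ℝ) - (k n : ℝ) - (j : ℝ)) / ((n : ℝ) + 1 - (k n : ℝ)))
              * (1 - p / n - 1 / (n : ℝ) ^ 2) ^ j)
          - ((n : ℝ) / p)
              * (1 - (1 - Real.exp (-p * (1 - (k n : ℝ) / n))) / (p * (1 - (k n : ℝ) / n)))|
        ≤ C := by
  set ε : ℝ := (1 - c) / 2 with hε_def
  have hε : 0 < ε := by simp [hε_def]; linarith
  obtain ⟨N₁, hN₁⟩ := Metric.tendsto_atTop.mp hlim ε hε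
  set K : ℝ := (2 + p) + 4 * (p + 1) ^ 2 with hK_def
  refine ⟨1 / p ^ 2 + (p ^ 2 + 4 * p + 2) / (p ^ 4 * ε ^ 2) + K / (p ^ 2 * ε),
    max N₁ (max 2 ⌈2 * (p + 1)⌉₊), fun n hn => ?_⟩
  have hn1 : 2 ≤ n := le_trans (le_max_left 2 _) (le_trans (le_max_right N₁ _) hn)
  have hnN₁ : N₁ ≤ n := le_trans (le_max_left _ _) hn
  have hnp : 2 * (p + 1) ≤ (n : ℝ) := by
    have h := le_trans (le_max_right 2 _) (le_trans (le_max_right N₁ _) hn)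
    exact le_trans (Nat.le_ceil _) (by exact_mod_cast h)
  have hkn := hk n (by omega)
  set m : ℕ := n - k n with hm_def
  have hnR : (0:ℝ) < n := by positivity
  have hnR1 : (1:ℝ) ≤ n := by exact_mod_cast le_trans (by norm_num) hn1
  have hcast : (m : ℝ) = (n : ℝ) - (k n : ℝ) := by
    rw [hm_def]; push_cast [hkn.2]; ring
  have hmn : (m : ℝ) ≤ n := by
    rw [hcast]; have : (0:ℝ) ≤ k n := by positivity
    linarith only [this]
  -- lower bound on m
  have hklt : (k n : ℝ) / n < c + ε := by
    have := hN₁ n hnN₁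
    rw [Real.dist_eq] at this
    have h2 := abs_lt.mp this
    linarith only [h2.1, h2.2]
  have hmlow : ε * n ≤ (m : ℝ) := by
    have h1 : (k n : ℝ) < (c + ε) * n := by
      have := (div_lt_iff₀ hnR).mp hklt; linarith only [this]
    have h2 : (c + ε) * (n:ℝ) = (1 - ε) * n := by rw [hε_def]; ring
    rw [hcast]; linarith only [h1, h2]
  have hmpos : (0:ℝ) < m := lt_of_lt_of_le (by positivity) hmlow
  set x : ℝ := p / n + 1 / (n:ℝ) ^ 2 with hx_def
  set q : ℝ := 1 - x with hq_def
  have hx_pos : 0 < x := by positivity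
  have hx_le : x ≤ (p + 1) / n := by
    rw [hx_def]
    have h1 : 1 / (n:ℝ) ^ 2 ≤ 1 / n := by
      apply div_le_div_of_nonneg_left (by norm_num) hnR
      nlinarith [hnR, hnR1]
    have h2 : p / n + 1 / n = (p + 1) / n := by ring
    linarith only [h1, h2]
  have hx_half : x ≤ 1 / 2 := by
    refine le_trans hx_le ?_
    rw [div_le_iff₀ hnR]; linarith only [hnp]
  have hq_half : (1:ℝ)/2 ≤ q := by rw [hq_def]; linarith only [hx_half]
  have hq_pos : 0 < q := lt_of_lt_of_le one_half_pos hq_half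
  have hq_lt1 : q < 1 := by rw [hq_def]; linarith only [hx_pos]
  have hq_ne : q ≠ 1 := ne_of_lt hq_lt1
  set Q : ℝ := q ^ (m + 1) with hQ_def
  have hQ0 : 0 ≤ Q := by positivity
  have hQ1 : Q ≤ 1 := pow_le_one₀ (le_of_lt hq_pos) (le_of_lt hq_lt1)
  -- rewrite the sum
  have hrange : n - k n = m := rfl
  have hsum : (∑ j ∈ Finset.range (n - k n),
        (((n : ℝ) - (k n : ℝ) - (j : ℝ)) / ((n : ℝ) + 1 - (k n : ℝ)))
          * (1 - p / n - 1 / (n : ℝ) ^ 2) ^ j)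
      = ((m : ℝ) - ((m:ℝ) + 1) * q + Q) / (((m:ℝ) + 1) * (1 - q) ^ 2) := by
    rw [hrange]
    have e1 : ∀ j ∈ Finset.range m,
        (((n : ℝ) - (k n : ℝ) - (j : ℝ)) / ((n : ℝ) + 1 - (k n : ℝ)))
          * (1 - p / n - 1 / (n : ℝ) ^ 2) ^ j
        = (1 / ((m:ℝ) + 1)) * (((m : ℝ) - j) * q ^ j) := by
      intro j _
      have hqe : 1 - p / (n:ℝ) - 1 / (n:ℝ) ^ 2 = q := by rw [hq_def, hx_def]; ring
      rw [hqe, ← hcast]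
      have : (n : ℝ) + 1 - (k n : ℝ) = (m:ℝ) + 1 := by rw [hcast]; ring
      rw [this]; ring
    rw [Finset.sum_congr rfl e1, ← Finset.mul_sum, sum_aux12 q hq_ne m]
    have hm1 : (m:ℝ) + 1 ≠ 0 := by positivity
    field_simp
    rfl
  have hα : 1 - (k n : ℝ) / n = (m:ℝ) / n := by
    rw [hcast]; field_simp
  set R : ℝ := Real.exp (-p * ((m:ℝ) / n)) with hR_def
  have hR0 : 0 ≤ R := le_of_lt (Real.exp_pos _)
  have hR1 : R ≤ 1 := Real.exp_le_one_iff.mpr (by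
    have : 0 ≤ p * ((m:ℝ)/n) := by positivity
    linarith only [this])
  have hpn1 : (0:ℝ) < p * n + 1 := by positivity
  have hm1pos : (0:ℝ) < (m:ℝ) + 1 := by positivity
  -- closed forms
  have h1q : (1:ℝ) - q = (p * n + 1) / (n:ℝ) ^ 2 := by
    rw [hq_def, hx_def]; field_simp; ring
  have eqS : ((m : ℝ) - ((m:ℝ) + 1) * q + Q) / (((m:ℝ) + 1) * (1 - q) ^ 2)
      = (n:ℝ) ^ 2 / (p * n + 1)
        - (n:ℝ) ^ 4 * (1 - Q) / (((m:ℝ) + 1) * (p * (n:ℝ) + 1) ^ 2) := by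
    have hqx : q = 1 - (p * n + 1) / (n:ℝ) ^ 2 := by
      rw [hq_def, hx_def]; field_simp
    rw [h1q, hqx]
    exact alg_S12 (m:ℝ) n p Q (ne_of_gt hnR) (ne_of_gt hm1pos) (ne_of_gt hpn1)
  have eqT : ((n : ℝ) / p) * (1 - (1 - R) / (p * ((m:ℝ) / n)))
      = (n:ℝ) / p - (n:ℝ) ^ 2 * (1 - R) / (p ^ 2 * (m:ℝ)) :=
    alg_T12 (m:ℝ) n p R (ne_of_gt hnR) (ne_of_gt hmpos) (ne_of_gt hp)
  rw [hsum, hα, eqS, eqT]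
  clear hsum eqS eqT hα h1q hN₁ hlim hk hklt hrange
  -- exponent bounds
  set a : ℝ := -(((m:ℝ) + 1) * x) with ha_def
  set b : ℝ := -p * ((m:ℝ) / n) with hb_def
  set a' : ℝ := -(((m:ℝ) + 1) * (x / q)) with ha'_def
  have hb0 : b ≤ 0 := by
    rw [hb_def]
    have : 0 ≤ p * ((m:ℝ)/n) := by positivity
    linarith only [this]
  have hba_eq : b - a = (p * n + (m:ℝ) + 1) / (n:ℝ) ^ 2 := by
    rw [hb_def, ha_def, hx_def]; field_simp; ring
  have hab : a ≤ b := by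
    have h0 : 0 ≤ (p * n + (m:ℝ) + 1) / (n:ℝ) ^ 2 := by positivity
    linarith only [hba_eq ▸ h0]
  have ha0 : a ≤ 0 := le_trans hab hb0
  have hba_le : b - a ≤ (p + 2) / n := by
    rw [hba_eq, div_le_div_iff₀ (by positivity) hnR]
    linarith only [mul_nonneg (sub_nonneg.mpr hmn) hnR.le,
      mul_nonneg (sub_nonneg.mpr hnR1) hnR.le]
  have hxq : x ≤ x / q := by
    rw [le_div_iff₀ hq_pos]
    have := mul_le_mul_of_nonneg_left hq_lt1.le hx_pos.le
    linarith only [this]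
  have ha'a : a' ≤ a := by
    rw [ha_def, ha'_def]
    have := mul_le_mul_of_nonneg_left hxq hm1pos.le
    linarith only [this]
  have haa'_le : a - a' ≤ 4 * (p + 1) ^ 2 / n := by
    have he : a - a' = ((m:ℝ) + 1) * x ^ 2 / q := by
      have hq1x : (1:ℝ) - x ≠ 0 := ne_of_gt (by linarith only [hx_half])
      rw [ha_def, ha'_def, hq_def]; field_simp; ring
    rw [he]
    have hnum : ((m:ℝ) + 1) * x ^ 2 ≤ (2 * n) * ((p + 1) / n) ^ 2 := by
      have h1 : (m:ℝ) + 1 ≤ 2 * n := by linarith only [hmn, hnR1]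
      have h2 : x ^ 2 ≤ ((p + 1) / n) ^ 2 := by
        apply pow_le_pow_left₀ hx_pos.le hx_le
      exact mul_le_mul h1 h2 (by positivity) (by positivity)
    calc ((m:ℝ) + 1) * x ^ 2 / q ≤ ((2 * n) * ((p + 1) / n) ^ 2) / (1/2) :=
          div_le_div₀ (by positivity) hnum (by norm_num) hq_half
      _ = 4 * (p + 1) ^ 2 / n := by field_simp; ring
  have hQle : Q ≤ Real.exp a := by
    have h1 : q ≤ Real.exp (-x) := by
      have := Real.add_one_le_exp (-x); rw [hq_def]; linarith only [this]
    calc Q = q ^ (m + 1) := rfl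
      _ ≤ (Real.exp (-x)) ^ (m + 1) := pow_le_pow_left₀ hq_pos.le h1 _
      _ = Real.exp a := by
          rw [← Real.exp_nat_mul, ha_def]; congr 1; push_cast; ring
  have hQge : Real.exp a' ≤ Q := by
    have h5 : x/q + 1 ≤ Real.exp (x/q) := by
      have := Real.add_one_le_exp (x/q); linarith only [this]
    have h6 : q * (x/q + 1) = x + q := by field_simp
    have h7 : x + q = 1 := by rw [hq_def]; ring
    have key : 1 ≤ q * Real.exp (x/q) := by
      calc (1:ℝ) = x + q := h7.symm
        _ = q * (x/q + 1) := h6.symm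
        _ ≤ q * Real.exp (x/q) := mul_le_mul_of_nonneg_left h5 hq_pos.le
    have h8 : Real.exp (-(x/q)) ≤ q := by
      rw [Real.exp_neg, inv_eq_one_div, div_le_iff₀ (Real.exp_pos _)]; linarith only [key]
    calc Real.exp a' = (Real.exp (-(x/q))) ^ (m + 1) := by
          rw [← Real.exp_nat_mul, ha'_def]; congr 1; push_cast; ring
      _ ≤ q ^ (m + 1) := pow_le_pow_left₀ (Real.exp_pos _).le h8 _
      _ = Q := rfl
  have hR_eq : R = Real.exp b := by rw [hR_def, hb_def]
  have hRQ : R - Q ≤ K / n := by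
    have h1 : Real.exp b - Real.exp a' ≤ b - a' :=
      exp_lip12 (le_trans ha'a hab) hb0
    have h2 : b - a' ≤ (p + 2) / n + 4 * (p + 1) ^ 2 / n := by linarith only [hba_le, haa'_le]
    have h3 : (p + 2) / n + 4 * (p + 1) ^ 2 / n = K / n := by
      rw [hK_def]; ring
    have h4 : Real.exp b - Q ≤ b - a' := by linarith only [h1, hQge]
    have h5 : b - a' ≤ K / ↑n := by linarith only [h2, h3]
    rw [hR_eq]
    exact le_trans h4 h5
  have hQR : Q - R ≤ K / n := by
    have h1 : Real.exp a ≤ Real.exp b := Real.exp_le_exp.mpr hab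
    have h2 : (0:ℝ) ≤ K / n := by rw [hK_def]; positivity
    rw [hR_eq]
    linarith only [h1, h2, hQle]
  have hQR_abs : |Q - R| ≤ K / n := abs_le.mpr ⟨by linarith only [hRQ], hQR⟩
  -- split the difference
  have hsplit : ((n:ℝ) ^ 2 / (p * n + 1)
        - (n:ℝ) ^ 4 * (1 - Q) / (((m:ℝ) + 1) * (p * (n:ℝ) + 1) ^ 2))
      - ((n:ℝ) / p - (n:ℝ) ^ 2 * (1 - R) / (p ^ 2 * (m:ℝ)))
      = ((n:ℝ) ^ 2 / (p * n + 1) - (n:ℝ) / p)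
        + ((n:ℝ) ^ 2 / (p ^ 2 * (m:ℝ))
            - (n:ℝ) ^ 4 / (((m:ℝ) + 1) * (p * (n:ℝ) + 1) ^ 2)) * (1 - Q)
        + ((n:ℝ) ^ 2 / (p ^ 2 * (m:ℝ))) * (Q - R) := by
    ring
  rw [hsplit]
  have hb1 : |(n:ℝ) ^ 2 / (p * n + 1) - (n:ℝ) / p| ≤ 1 / p ^ 2 := by
    have he : (n:ℝ) ^ 2 / (p * n + 1) - (n:ℝ) / p = -((n:ℝ) / (p * (p * n + 1))) := by
      field_simp; ring
    rw [he, abs_neg, abs_of_nonneg (by positivity),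
      div_le_div_iff₀ (by positivity) (by positivity)]
    have he2 : (1:ℝ) * (p * (p * (n:ℝ) + 1)) = p ^ 2 * n + p := by ring
    linarith only [he2, hp.le]
  have hBA_eq : (n:ℝ) ^ 2 / (p ^ 2 * (m:ℝ))
        - (n:ℝ) ^ 4 / (((m:ℝ) + 1) * (p * (n:ℝ) + 1) ^ 2)
      = ((n:ℝ) ^ 2 * ((m:ℝ) * (2 * p * n + 1) + (p * n + 1) ^ 2))
        / (p ^ 2 * (m:ℝ) * ((m:ℝ) + 1) * (p * n + 1) ^ 2) := by
    field_simp; ring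
  have hBA_nonneg : 0 ≤ (n:ℝ) ^ 2 / (p ^ 2 * (m:ℝ))
      - (n:ℝ) ^ 4 / (((m:ℝ) + 1) * (p * (n:ℝ) + 1) ^ 2) := by
    rw [hBA_eq]; positivity
  have hBA_le : (n:ℝ) ^ 2 / (p ^ 2 * (m:ℝ))
        - (n:ℝ) ^ 4 / (((m:ℝ) + 1) * (p * (n:ℝ) + 1) ^ 2)
      ≤ (p ^ 2 + 4 * p + 2) / (p ^ 4 * ε ^ 2) := by
    rw [hBA_eq]
    have hnum : (n:ℝ) ^ 2 * ((m:ℝ) * (2 * p * n + 1) + (p * n + 1) ^ 2)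
        ≤ (p ^ 2 + 4 * p + 2) * (n:ℝ) ^ 4 := by
      have step : (n:ℝ) ^ 2 * ((m:ℝ) * (2 * p * n + 1) + (p * n + 1) ^ 2)
          ≤ (n:ℝ) ^ 2 * ((n:ℝ) * (2 * p * n + (n:ℝ)) + (p * n + (n:ℝ)) ^ 2) := by
        gcongr
      calc (n:ℝ) ^ 2 * ((m:ℝ) * (2 * p * n + 1) + (p * n + 1) ^ 2)
          ≤ (n:ℝ) ^ 2 * ((n:ℝ) * (2 * p * n + (n:ℝ)) + (p * n + (n:ℝ)) ^ 2) := step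
        _ = (p ^ 2 + 4 * p + 2) * (n:ℝ) ^ 4 := by ring
    have hden : p ^ 4 * ε ^ 2 * (n:ℝ) ^ 4
        ≤ p ^ 2 * (m:ℝ) * ((m:ℝ) + 1) * (p * n + 1) ^ 2 := by
      have hεn : ε * (n:ℝ) ≤ (m:ℝ) + 1 := by linarith only [hmlow]
      calc p ^ 4 * ε ^ 2 * (n:ℝ) ^ 4
          = p ^ 2 * (ε * n) * (ε * n) * (p * n) ^ 2 := by ring
        _ ≤ p ^ 2 * (m:ℝ) * ((m:ℝ) + 1) * (p * n + 1) ^ 2 := by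
            gcongr <;> linarith only [hmlow, hεn]
    calc ((n:ℝ) ^ 2 * ((m:ℝ) * (2 * p * n + 1) + (p * n + 1) ^ 2))
          / (p ^ 2 * (m:ℝ) * ((m:ℝ) + 1) * (p * n + 1) ^ 2)
        ≤ ((p ^ 2 + 4 * p + 2) * (n:ℝ) ^ 4) / (p ^ 4 * ε ^ 2 * (n:ℝ) ^ 4) :=
          div_le_div₀ (by positivity) hnum (by positivity) hden
      _ = (p ^ 2 + 4 * p + 2) / (p ^ 4 * ε ^ 2) := by
          rw [div_eq_div_iff (by positivity) (by positivity)]; ring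
  have hb2 : |((n:ℝ) ^ 2 / (p ^ 2 * (m:ℝ))
        - (n:ℝ) ^ 4 / (((m:ℝ) + 1) * (p * (n:ℝ) + 1) ^ 2)) * (1 - Q)|
      ≤ (p ^ 2 + 4 * p + 2) / (p ^ 4 * ε ^ 2) := by
    rw [abs_of_nonneg (mul_nonneg hBA_nonneg (by linarith only [hQ1]))]
    have h1 := mul_le_mul_of_nonneg_left (show 1 - Q ≤ 1 by linarith only [hQ0]) hBA_nonneg
    linarith only [h1, hBA_le]
  have hB_le : (n:ℝ) ^ 2 / (p ^ 2 * (m:ℝ)) ≤ (n:ℝ) / (p ^ 2 * ε) := by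
    calc (n:ℝ) ^ 2 / (p ^ 2 * (m:ℝ)) ≤ (n:ℝ) ^ 2 / (p ^ 2 * (ε * n)) := by
          gcongr
      _ = (n:ℝ) / (p ^ 2 * ε) := by field_simp
  have hb3 : |((n:ℝ) ^ 2 / (p ^ 2 * (m:ℝ))) * (Q - R)| ≤ K / (p ^ 2 * ε) := by
    rw [abs_mul, abs_of_nonneg (by positivity : (0:ℝ) ≤ (n:ℝ) ^ 2 / (p ^ 2 * (m:ℝ)))]
    have hKpos : (0:ℝ) ≤ K := by rw [hK_def]; positivity
    calc ((n:ℝ) ^ 2 / (p ^ 2 * (m:ℝ))) * |Q - R|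
        ≤ ((n:ℝ) / (p ^ 2 * ε)) * (K / n) :=
          mul_le_mul hB_le hQR_abs (abs_nonneg _) (by positivity)
      _ = K / (p ^ 2 * ε) := by field_simp
  calc |((n:ℝ) ^ 2 / (p * n + 1) - (n:ℝ) / p)
        + ((n:ℝ) ^ 2 / (p ^ 2 * (m:ℝ))
            - (n:ℝ) ^ 4 / (((m:ℝ) + 1) * (p * (n:ℝ) + 1) ^ 2)) * (1 - Q)
        + ((n:ℝ) ^ 2 / (p ^ 2 * (m:ℝ))) * (Q - R)|
      ≤ |((n:ℝ) ^ 2 / (p * n + 1) - (n:ℝ) / p)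
        + ((n:ℝ) ^ 2 / (p ^ 2 * (m:ℝ))
            - (n:ℝ) ^ 4 / (((m:ℝ) + 1) * (p * (n:ℝ) + 1) ^ 2)) * (1 - Q)|
        + |((n:ℝ) ^ 2 / (p ^ 2 * (m:ℝ))) * (Q - R)| := abs_add_le _ _
    _ ≤ (|(n:ℝ) ^ 2 / (p * n + 1) - (n:ℝ) / p|
        + |((n:ℝ) ^ 2 / (p ^ 2 * (m:ℝ))
            - (n:ℝ) ^ 4 / (((m:ℝ) + 1) * (p * (n:ℝ) + 1) ^ 2)) * (1 - Q)|)
        + |((n:ℝ) ^ 2 / (p ^ 2 * (m:ℝ))) * (Q - R)| := by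
          gcongr
          exact abs_add_le _ _
    _ ≤ (1 / p ^ 2 + (p ^ 2 + 4 * p + 2) / (p ^ 4 * ε ^ 2)) + K / (p ^ 2 * ε) := by
          gcongr
    _ = 1 / p ^ 2 + (p ^ 2 + 4 * p + 2) / (p ^ 4 * ε ^ 2) + K / (p ^ 2 * ε) := by ring
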